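/- arXiv:math/9604221 — 3 statements merged into one kernel-verified Lean document; each statement's English description precedes it below -/
import Mathlib

section
/- Let λ: ℝ → ℂⁿ be a proper C^∞ embedding. Then there exists a continuous function η: ℝ → (0, ∞) such that every map γ: ℝ → ℂⁿ of class C¹ satisfying |γ^(s)(t) − λ^(s)(t)| < η(t) for all t ∈ ℝ and s = 0, 1 is itself a proper embedding. -/
open intervalIntegral Metric Set Filter

noncomputable def segInt {n : ℕ} (lam : ℝ → EuclideanSpace ℂ (Fin n)) (p : ℝ × ℝ) :
    EuclideanSpace ℂ (Fin n) :=
  ∫ u in (0:ℝ)..1, deriv lam ((p.1 - p.2) * u + p.2)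

theorem continuous_segInt {n : ℕ} {lam : ℝ → EuclideanSpace ℂ (Fin n)}
    (h : ContDiff ℝ (⊤ : ℕ∞) lam) : Continuous (segInt lam) := by
  have hd : Continuous (deriv lam) := h.continuous_deriv (by exact_mod_cast le_top)
  apply continuous_parametric_intervalIntegral_of_continuous' (μ := MeasureTheory.volume)
  exact hd.comp (by fun_prop)

theorem segInt_smul {n : ℕ} {lam : ℝ → EuclideanSpace ℂ (Fin n)}
    (h : ContDiff ℝ (⊤ : ℕ∞) lam) (p : ℝ × ℝ) :
    (p.1 - p.2) • segInt lam p = lam p.1 - lam p.2 := by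
  rcases eq_or_ne p.1 p.2 with he | he
  · simp [he]
  · have hc : p.1 - p.2 ≠ 0 := sub_ne_zero.2 he
    have hint : ∀ a b : ℝ, IntervalIntegrable (deriv lam) MeasureTheory.volume a b :=
      fun a b => (h.continuous_deriv (by exact_mod_cast le_top)).intervalIntegrable a b
    have key : segInt lam p = (p.1 - p.2)⁻¹ • ∫ x in p.2..p.1, deriv lam x := by
      rw [segInt]
      rw [intervalIntegral.integral_comp_mul_add (f := deriv lam) hc p.2]
      norm_num
    rw [key, smul_inv_smul₀ hc]
    exact intervalIntegral.integral_deriv_eq_sub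
      (fun x _ => (h.differentiable (by simp)).differentiableAt) (hint _ _)

theorem segInt_ne_zero {n : ℕ} {lam : ℝ → EuclideanSpace ℂ (Fin n)}
    (h : ContDiff ℝ (⊤ : ℕ∞) lam) (hinj : Function.Injective lam)
    (himm : ∀ t : ℝ, deriv lam t ≠ 0) (p : ℝ × ℝ) : segInt lam p ≠ 0 := by
  rcases eq_or_ne p.1 p.2 with he | he
  · have : segInt lam p = deriv lam p.2 := by
      simp [segInt, he]
    rw [this]; exact himm _
  · intro h0
    have := segInt_smul h p
    rw [h0, smul_zero] at this
    exact he (hinj (by exact sub_eq_zero.1 this.symm))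

noncomputable def etaBound {n : ℕ} (lam : ℝ → EuclideanSpace ℂ (Fin n)) (x : ℝ) : Set ℝ :=
  Ioi 0 ∩ Iic ‖deriv lam x‖ ∩ Iic 1 ∩
    Iic (infDist (lam x) (lam '' {s | 1 ≤ |s - x|}) / 2) ∩
    ⋂ p ∈ (Icc (x-1) (x+1) ×ˢ Icc (x-1) (x+1) : Set (ℝ × ℝ)), Iic (‖segInt lam p‖ / 2)

theorem exists_eta {n : ℕ} (lam : ℝ → EuclideanSpace ℂ (Fin n))
    (h : ContDiff ℝ (⊤ : ℕ∞) lam) (hinj : Function.Injective lam)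
    (hproper : IsProperMap lam) (himm : ∀ t : ℝ, deriv lam t ≠ 0) :
    ∃ η : C(ℝ, ℝ), ∀ x, η x ∈ etaBound lam x := by
  apply exists_continuous_forall_mem_convex_of_local_const
  · intro x
    refine ((((convex_Ioi _).inter (convex_Iic _)).inter (convex_Iic _)).inter
      (convex_Iic _)).inter ?_
    exact convex_iInter fun p => convex_iInter fun _ => convex_Iic _
  · intro x
    -- positive bound for the derivative
    have ha : 0 < ‖deriv lam x‖ := norm_pos_iff.2 (himm x)
    -- closed separated set
    set S : Set (EuclideanSpace ℂ (Fin n)) := lam '' {s | 3/4 ≤ |s - x|} with hS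
    have hSclosed : IsClosed S := by
      apply hproper.isClosedMap
      have : {s : ℝ | 3/4 ≤ |s - x|} = (Metric.ball x (3/4))ᶜ := by
        ext s; simp [Real.dist_eq, abs_sub_comm, not_lt]
      rw [this]
      exact Metric.isOpen_ball.isClosed_compl
    have hxS : lam x ∉ S := by
      rintro ⟨s, hs, hsx⟩
      have : s = x := hinj hsx
      rw [this] at hs
      simp at hs; norm_num at hs
    have hSne : S.Nonempty := ⟨lam (x+1), ⟨x+1, by simp; norm_num, rfl⟩⟩
    have hc : 0 < infDist (lam x) S := (hSclosed.notMem_iff_infDist_pos hSne).1 hxS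
    set c := infDist (lam x) S with hcdef
    -- minimum of segInt norm on a big square
    obtain ⟨q₀, hq₀, hq₀min⟩ := (isCompact_Icc.prod isCompact_Icc).exists_isMinOn
      (s := (Icc (x-2) (x+2) ×ˢ Icc (x-2) (x+2) : Set (ℝ × ℝ)))
      ⟨(x, x), by constructor <;> (constructor <;> linarith)⟩
      ((continuous_segInt h).norm.continuousOn)
    set m := ‖segInt lam q₀‖ with hmdef
    have hm : 0 < m := norm_pos_iff.2 (segInt_ne_zero h hinj himm q₀)
    refine ⟨min (min (‖deriv lam x‖/2) 1) (min (c/4) (m/2)), ?_⟩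
    have hU1 : ∀ᶠ y in nhds x, ‖deriv lam x‖/2 < ‖deriv lam y‖ := by
      have hcont : Continuous fun y => ‖deriv lam y‖ :=
        (h.continuous_deriv (by exact_mod_cast le_top)).norm
      have := hcont.continuousAt (x := x) |>.eventually_mem
        (Ioi_mem_nhds (show ‖deriv lam x‖/2 < ‖deriv lam x‖ by linarith))
      exact this.mono (fun y hy => hy)
    have hU2 : ∀ᶠ y in nhds x, dist (lam x) (lam y) < c/2 := by
      have hcont : Continuous (fun y => dist (lam x) (lam y)) :=
        continuous_const.dist h.continuous
      have := hcont.continuousAt (x := x) |>.eventually_mem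
        (Iio_mem_nhds (show dist (lam x) (lam x) < c/2 by simp; linarith))
      exact this.mono (fun y hy => hy)
    have hU3 : ∀ᶠ y in nhds x, |y - x| < 1/4 := by
      have hcont : Continuous (fun y : ℝ => |y - x|) := by fun_prop
      have := hcont.continuousAt (x := x) |>.eventually_mem
        (Iio_mem_nhds (show |x - x| < 1/4 by norm_num))
      exact this.mono (fun y hy => hy)
    filter_upwards [hU1, hU2, hU3] with y hy1 hy2 hy3
    have hDy : c/2 ≤ infDist (lam y) (lam '' {s | 1 ≤ |s - y|}) := by
      have hsub : lam '' {s | 1 ≤ |s - y|} ⊆ S := by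
        apply image_mono
        intro s hs
        simp only [mem_setOf_eq] at hs ⊢
        have : |s - x| ≥ |s - y| - |y - x| := by
          have := abs_sub_abs_le_abs_sub (s - y) (x - y)
          have h2 : s - y - (x - y) = s - x := by ring
          rw [h2] at this
          rw [abs_sub_comm y x]; linarith
        linarith
      have hne' : (lam '' {s | 1 ≤ |s - y|}).Nonempty := ⟨lam (y+1), ⟨y+1, by simp, rfl⟩⟩
      have h1 : infDist (lam y) S ≤ infDist (lam y) (lam '' {s | 1 ≤ |s - y|}) :=
        infDist_le_infDist_of_subset hsub hne'
      have h2 : infDist (lam x) S ≤ infDist (lam y) S + dist (lam x) (lam y) :=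
        infDist_le_infDist_add_dist
      linarith
    set e := min (min (‖deriv lam x‖/2) 1) (min (c/4) (m/2)) with hedef
    have he1 : e ≤ ‖deriv lam x‖/2 := le_trans (min_le_left _ _) (min_le_left _ _)
    have he2 : e ≤ 1 := le_trans (min_le_left _ _) (min_le_right _ _)
    have he3 : e ≤ c/4 := le_trans (min_le_right _ _) (min_le_left _ _)
    have he4 : e ≤ m/2 := le_trans (min_le_right _ _) (min_le_right _ _)
    have he0 : 0 < e := by
      apply lt_min (lt_min (by linarith) one_pos) (lt_min (by linarith) (by linarith))
    simp only [etaBound, mem_inter_iff, mem_Ioi, mem_Iic, mem_iInter]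
    refine ⟨⟨⟨⟨he0, by linarith⟩, he2⟩, by linarith⟩, ?_⟩
    intro p hp
    have hq : p ∈ (Icc (x-2) (x+2) ×ˢ Icc (x-2) (x+2) : Set (ℝ × ℝ)) := by
      obtain ⟨hp1, hp2⟩ := hp
      have := abs_lt.1 hy3
      constructor
      · exact ⟨by linarith [hp1.1], by linarith [hp1.2]⟩
      · exact ⟨by linarith [hp2.1], by linarith [hp2.2]⟩
    have hmp : m ≤ ‖segInt lam p‖ := hq₀min hq
    linarith

/-- **Stability of proper embeddings under `C¹`-small perturbations.**
Let `λ : ℝ → ℂⁿ` be a proper `C^∞` embedding.  Then there is a continuous function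
`η : ℝ → (0, ∞)` such that every `C¹` map `γ : ℝ → ℂⁿ` with
`|γ⁽ˢ⁾(t) − λ⁽ˢ⁾(t)| < η(t)` for all `t ∈ ℝ` and `s = 0, 1` is itself a proper embedding. -/
theorem proper_embedding_stability
    (n : ℕ)
    (lam : ℝ → EuclideanSpace ℂ (Fin n))
    (hlam_smooth : ContDiff ℝ (⊤ : ℕ∞) lam)
    (hlam_inj : Function.Injective lam)
    (hlam_proper : IsProperMap lam)
    (hlam_imm : ∀ t : ℝ, deriv lam t ≠ 0) :
    ∃ η : ℝ → ℝ, Continuous η ∧ (∀ t, 0 < η t) ∧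
      ∀ γ : ℝ → EuclideanSpace ℂ (Fin n), ContDiff ℝ 1 γ →
        (∀ t : ℝ, ∀ s : ℕ, s ≤ 1 → ‖iteratedDeriv s γ t - iteratedDeriv s lam t‖ < η t) →
        Function.Injective γ ∧ IsProperMap γ ∧ ∀ t : ℝ, deriv γ t ≠ 0 := by
  obtain ⟨η, hη⟩ := exists_eta lam hlam_smooth hlam_inj hlam_proper hlam_imm
  have hη' : ∀ x, η x ∈ etaBound lam x := hη
  simp only [etaBound, mem_inter_iff, mem_Ioi, mem_Iic, mem_iInter] at hη'
  have hpos : ∀ x, 0 < η x := fun x => (hη' x).1.1.1.1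
  have hled : ∀ x, η x ≤ ‖deriv lam x‖ := fun x => (hη' x).1.1.1.2
  have hle1 : ∀ x, η x ≤ 1 := fun x => (hη' x).1.1.2
  have hleD : ∀ x, η x ≤ infDist (lam x) (lam '' {s | 1 ≤ |s - x|}) / 2 := fun x => (hη' x).1.2
  have hleM : ∀ x, ∀ p : ℝ × ℝ, p ∈ (Icc (x-1) (x+1) ×ˢ Icc (x-1) (x+1) : Set (ℝ × ℝ)) →
      η x ≤ ‖segInt lam p‖ / 2 := fun x p hp => (hη' x).2 p hp
  have hdlam : Continuous (deriv lam) := hlam_smooth.continuous_deriv (by exact_mod_cast le_top)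
  refine ⟨η, η.continuous, hpos, ?_⟩
  intro γ hγ hclose
  have h0 : ∀ t, ‖γ t - lam t‖ < η t := by
    intro t
    have := hclose t 0 (by norm_num)
    simpa [iteratedDeriv_zero] using this
  have h1 : ∀ t, ‖deriv γ t - deriv lam t‖ < η t := by
    intro t
    have := hclose t 1 le_rfl
    simpa [iteratedDeriv_one] using this
  have hdγ : Continuous (deriv γ) := hγ.continuous_deriv le_rfl
  have himm : ∀ t, deriv γ t ≠ 0 := by
    intro t ht
    have := h1 t
    rw [ht, zero_sub, norm_neg] at this
    exact absurd (lt_of_lt_of_le this (hled t)) (lt_irrefl _)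
  have hkey : ∀ s t : ℝ, s < t → γ s ≠ γ t := by
    intro s t hst hEq
    rcases le_or_gt (t - s) 1 with hts | hts
    · -- close case: use integral comparison
      set p : ℝ × ℝ := (t, s) with hpdef
      have hGpos : 0 < ‖segInt lam p‖ :=
        norm_pos_iff.2 (segInt_ne_zero hlam_smooth hlam_inj hlam_imm p)
      have hγint : ∫ u in s..t, deriv γ u = γ t - γ s :=
        intervalIntegral.integral_deriv_eq_sub
          (fun x _ => (hγ.differentiable one_ne_zero).differentiableAt)
          (hdγ.intervalIntegrable s t)
      have hlamint : ∫ u in s..t, deriv lam u = lam t - lam s :=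
        intervalIntegral.integral_deriv_eq_sub
          (fun x _ => (hlam_smooth.differentiable (by simp)).differentiableAt)
          (hdlam.intervalIntegrable s t)
      have hdiff : lam t - lam s = ∫ u in s..t, (deriv lam u - deriv γ u) := by
        rw [intervalIntegral.integral_sub (hdlam.intervalIntegrable s t)
          (hdγ.intervalIntegrable s t), hlamint, hγint, hEq]
        simp
      have hbound : ∀ u ∈ Icc s t, ‖deriv lam u - deriv γ u‖ ≤ ‖segInt lam p‖ / 2 := by
        intro u hu
        have hp : p ∈ (Icc (u-1) (u+1) ×ˢ Icc (u-1) (u+1) : Set (ℝ × ℝ)) := by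
          constructor
          · exact ⟨by linarith [hu.2], by linarith [hu.1]⟩
          · exact ⟨by linarith [hu.2], by linarith [hu.1]⟩
        have := hleM u p hp
        have h1u := h1 u
        rw [norm_sub_rev] at h1u
        linarith
      have hnormle : ‖lam t - lam s‖ ≤ (t - s) * (‖segInt lam p‖ / 2) := by
        rw [hdiff]
        calc ‖∫ u in s..t, (deriv lam u - deriv γ u)‖
            ≤ ∫ u in s..t, ‖deriv lam u - deriv γ u‖ :=
              intervalIntegral.norm_integral_le_integral_norm hst.le
          _ ≤ ∫ _u in s..t, (‖segInt lam p‖ / 2) := by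
              apply intervalIntegral.integral_mono_on hst.le
                ((hdlam.sub hdγ).norm.intervalIntegrable s t)
                (intervalIntegrable_const) hbound
          _ = (t - s) * (‖segInt lam p‖ / 2) := by
              rw [intervalIntegral.integral_const, smul_eq_mul]
      have hnormeq : ‖lam t - lam s‖ = (t - s) * ‖segInt lam p‖ := by
        have := segInt_smul hlam_smooth p
        simp only [hpdef] at this
        rw [← this, norm_smul]
        simp [hpdef, abs_of_pos (by linarith : (0:ℝ) < t - s)]
      nlinarith
    · -- far case: use separation
      have hmem_t : lam t ∈ lam '' {u | 1 ≤ |u - s|} :=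
        ⟨t, by simp only [mem_setOf_eq]; rw [abs_of_pos (by linarith)]; linarith, rfl⟩
      have hmem_s : lam s ∈ lam '' {u | 1 ≤ |u - t|} :=
        ⟨s, by simp only [mem_setOf_eq]; rw [abs_of_neg (by linarith)]; linarith, rfl⟩
      have hDs : infDist (lam s) (lam '' {u | 1 ≤ |u - s|}) ≤ dist (lam s) (lam t) :=
        infDist_le_dist_of_mem hmem_t
      have hDt : infDist (lam t) (lam '' {u | 1 ≤ |u - t|}) ≤ dist (lam t) (lam s) :=
        infDist_le_dist_of_mem hmem_s
      have htri : dist (lam s) (lam t) ≤ dist (lam s) (γ s) + dist (γ s) (γ t) +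
          dist (γ t) (lam t) := dist_triangle4 _ _ _ _
      have h0s := h0 s
      have h0t := h0 t
      rw [show ‖γ s - lam s‖ = dist (γ s) (lam s) from (dist_eq_norm _ _).symm] at h0s
      rw [show ‖γ t - lam t‖ = dist (γ t) (lam t) from (dist_eq_norm _ _).symm] at h0t
      have hγdist : dist (γ s) (γ t) = 0 := by rw [hEq]; simp
      have hds := hleD s
      have hdt := hleD t
      rw [dist_comm (lam s) (γ s)] at htri
      rw [dist_comm (lam t) (lam s)] at hDt
      linarith
  constructor
  · intro a b hab
    by_contra hne
    rcases Ne.lt_or_gt hne with hl | hl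
    · exact hkey a b hl hab
    · exact hkey b a hl hab.symm
  constructor
  · -- properness
    have htend : Tendsto lam (cocompact ℝ) (cocompact (EuclideanSpace ℂ (Fin n))) :=
      (isProperMap_iff_tendsto_cocompact.1 hlam_proper).2
    have hnorm : Tendsto (fun t => ‖lam t‖) (cocompact ℝ) atTop :=
      tendsto_norm_cocompact_atTop.comp htend
    have hnormγ : Tendsto (fun t => ‖γ t‖) (cocompact ℝ) atTop := by
      apply tendsto_atTop_mono ?_ (tendsto_atTop_add_const_right (cocompact ℝ) (-1) hnorm)
      intro t
      have := h0 t
      have h2 : ‖lam t - γ t‖ < η t := by rwa [norm_sub_rev]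
      have h3 : ‖lam t‖ ≤ ‖γ t‖ + ‖lam t - γ t‖ := norm_le_insert' _ _
      have := hle1 t
      show ‖lam t‖ + -1 ≤ ‖γ t‖
      linarith
    have hcobdd : Tendsto γ (cocompact ℝ) (Bornology.cobounded (EuclideanSpace ℂ (Fin n))) :=
      tendsto_norm_atTop_iff_cobounded.1 hnormγ
    rw [Metric.cobounded_eq_cocompact] at hcobdd
    exact isProperMap_iff_tendsto_cocompact.2 ⟨hγ.continuous, hcobdd⟩
  · exact himm
end

section
/- Let n ≥ 2, let λ: ℝ → ℂⁿ be a proper C^∞ embedding, let K ⊂ ℂⁿ be compact, let ε > 0 and r ≥ 0 an integer. Let Z ⊂ ℝ be a finite set such that λ(t) ∈ ℂ × {0}^{n−1} for each t ∈ Z. Then there exist a vector v ∈ ℂⁿ with first coordinate 0 and an entire function h: ℂ → ℂ such that the shear Ψ(z) = z + h(z₁)v satisfies: (i) Ψ(ℂ × {0}^{n−1}) ∩ λ(ℝ) = λ(Z); (ii) |Ψ(z) − z| < ε for z ∈ K; and (iii) Ψ(z) = z + O(|z − λ(t)|^{r+1}) as z → λ(t), for every t ∈ Z. -/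
/-- The embedding `ℂ → ℂⁿ`, `ζ ↦ (ζ, 0, …, 0)`. -/
noncomputable def embC (n : ℕ) (ζ : ℂ) : EuclideanSpace ℂ (Fin (n + 2)) :=
  EuclideanSpace.single 0 ζ

lemma coord_norm_le {m : ℕ} (z : EuclideanSpace ℂ (Fin m)) (i : Fin m) : ‖z i‖ ≤ ‖z‖ := by
  rw [EuclideanSpace.norm_eq]
  have h1 : ‖z i‖ ^ 2 ≤ ∑ j, ‖z j‖ ^ 2 :=
    Finset.single_le_sum (f := fun j => ‖z j‖ ^ 2) (fun j _ => sq_nonneg _) (Finset.mem_univ i)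
  calc ‖z i‖ = Real.sqrt (‖z i‖ ^ 2) := by rw [Real.sqrt_sq (norm_nonneg _)]
    _ ≤ _ := Real.sqrt_le_sqrt h1

/-- **Moving the complex line off a proper embedding of `ℝ` by a shear.**
Let `n ≥ 2` (here `ℂⁿ` is `ℂ^(n+2)`), `λ : ℝ → ℂⁿ` a proper `C^∞` embedding, `K ⊂ ℂⁿ`
compact, `ε > 0`, `r ≥ 0`, and `Z ⊂ ℝ` a finite set with `λ(t) ∈ ℂ × {0}^{n-1}` for
`t ∈ Z`.  Then there is a shear `Ψ(z) = z + h(z₁)v`, with `h` entire and `π₁ v = 0`,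
such that (i) `Ψ(ℂ × {0}^{n-1}) ∩ λ(ℝ) = λ(Z)`, (ii) `|Ψ(z) − z| < ε` on `K`, and
(iii) `Ψ(z) = z + O(|z − λ(t)|^{r+1})` as `z → λ(t)`, for every `t ∈ Z`. -/
theorem shear_off_real_curve
    (n : ℕ)
    (lam : ℝ → EuclideanSpace ℂ (Fin (n + 2)))
    (hlam_smooth : ContDiff ℝ (⊤ : ℕ∞) lam)
    (hlam_inj : Function.Injective lam)
    (hlam_proper : IsProperMap lam)
    (hlam_imm : ∀ t : ℝ, deriv lam t ≠ 0)
    (K : Set (EuclideanSpace ℂ (Fin (n + 2)))) (hK : IsCompact K)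
    (ε : ℝ) (hε : 0 < ε) (r : ℕ)
    (Z : Set ℝ) (hZ_fin : Z.Finite)
    (hZ_line : ∀ t ∈ Z, lam t ∈ Set.range (embC n)) :
    ∃ (v : EuclideanSpace ℂ (Fin (n + 2))) (h : ℂ → ℂ)
      (Ψ : EuclideanSpace ℂ (Fin (n + 2)) → EuclideanSpace ℂ (Fin (n + 2))),
      v 0 = 0 ∧
      Differentiable ℂ h ∧
      (∀ z, Ψ z = z + h (z 0) • v) ∧
      (Ψ '' Set.range (embC n) ∩ Set.range lam = lam '' Z) ∧
      (∀ z ∈ K, ‖Ψ z - z‖ < ε) ∧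
      (∀ t ∈ Z, (fun z => Ψ z - z) =O[nhds (lam t)] fun z => ‖z - lam t‖ ^ (r + 1)) := by
  classical
  -- key : points of Z lie on the line, explicitly
  have key : ∀ t ∈ Z, lam t = embC n (lam t 0) := by
    intro t ht
    obtain ⟨w, hw⟩ := hZ_line t ht
    have h0 : lam t 0 = w := by
      rw [← hw]; simp [embC, EuclideanSpace.single_apply]
    rw [h0, hw]
  set s : Finset ℝ := hZ_fin.toFinset with hs_def
  -- the polynomial
  set p : ℂ → ℂ := fun x => ∏ t ∈ s, (x - lam t 0) ^ (r + 1) with hp_def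
  have hp_cd : ContDiff ℂ (⊤ : ℕ∞) p :=
    contDiff_prod fun t _ => (contDiff_id.sub contDiff_const).pow _
  have hp_diff : Differentiable ℂ p := hp_cd.differentiable (by simp)
  have hp_cont : Continuous p := hp_diff.continuous
  have hp_zero : ∀ x : ℂ, p x = 0 ↔ ∃ t ∈ Z, x = lam t 0 := by
    intro x
    simp only [hp_def, Finset.prod_eq_zero_iff, pow_eq_zero_iff (Nat.succ_ne_zero r),
      sub_eq_zero, hs_def, Set.Finite.mem_toFinset]
  -- the vector
  set v : EuclideanSpace ℂ (Fin (n + 2)) := EuclideanSpace.single 1 (1 : ℂ) with hv_def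
  have hv0 : v 0 = 0 := by
    simp [hv_def, EuclideanSpace.single_apply, Fin.ext_iff]
  have hv1 : v 1 = 1 := by simp [hv_def, EuclideanSpace.single_apply]
  have hvnorm : ‖v‖ = 1 := by simp [hv_def, EuclideanSpace.norm_single]
  -- coordinates of lam
  have lam0_cont : Continuous fun x : ℝ => lam x 0 :=
    ((EuclideanSpace.proj (0 : Fin (n + 2))).continuous).comp hlam_smooth.continuous
  -- the bad set
  set U : Set ℝ := {x | p (lam x 0) ≠ 0} with hU_def
  have hU_open : IsOpen U := by
    have hcl : IsClosed {x : ℝ | p (lam x 0) = 0} :=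
      isClosed_eq (hp_cont.comp lam0_cont) continuous_const
    exact hcl.isOpen_compl
  set g : ℝ → ℂ := fun x => lam x 1 * (p (lam x 0))⁻¹ with hg_def
  have hg_cd : ∀ x ∈ U, ContDiffAt ℝ 1 g x := by
    intro x hx
    have hlam1 : ContDiff ℝ 1 lam := hlam_smooth.of_le (by exact_mod_cast le_top)
    have h1 : ContDiff ℝ 1 fun x : ℝ => lam x 1 := by
      have := (((EuclideanSpace.proj (1 : Fin (n + 2))).restrictScalars ℝ).contDiff).comp hlam1
      simpa [Function.comp_def] using this
    have h2 : ContDiff ℝ 1 fun x : ℝ => p (lam x 0) := by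
      have h0 : ContDiff ℝ 1 fun x : ℝ => lam x 0 := by
        have := (((EuclideanSpace.proj (0 : Fin (n + 2))).restrictScalars ℝ).contDiff).comp hlam1
        simpa [Function.comp_def] using this
      exact (((hp_cd.restrict_scalars ℝ).of_le (by exact_mod_cast le_top))).comp h0
    exact (h1.contDiffAt).mul ((h2.contDiffAt).inv hx)
  have hbad : Dense (g '' U)ᶜ := by
    apply dense_compl_of_dimH_lt_finrank
    have h1 : dimH (g '' U) ≤ dimH U := by
      apply dimH_image_le_of_locally_lipschitzOn
      intro x hx
      obtain ⟨C, t, ht, hlip⟩ := (hg_cd x hx).exists_lipschitzOnWith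
      exact ⟨C, t, nhdsWithin_le_nhds ht, hlip⟩
    have h2 : dimH U ≤ 1 := by
      calc dimH U ≤ dimH (Set.univ : Set ℝ) := dimH_mono (Set.subset_univ U)
        _ = 1 := Real.dimH_univ
    calc dimH (g '' U) ≤ 1 := h1.trans h2
      _ < (Module.finrank ℝ ℂ : ENNReal) := by
          rw [Complex.finrank_real_complex]; norm_num
  -- bound of p on K
  obtain ⟨C, hC0, hC⟩ : ∃ C : ℝ, 0 ≤ C ∧ ∀ z ∈ K, ‖p (z 0)‖ ≤ C := by
    rcases K.eq_empty_or_nonempty with hKe | hKne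
    · exact ⟨0, le_refl _, by simp [hKe]⟩
    obtain ⟨C, hC⟩ := (hK.image (hp_cont.comp
      ((EuclideanSpace.proj (0 : Fin (n + 2))).continuous)).norm).bddAbove.imp
      (fun C hC => hC)
    refine ⟨max C 0, le_max_right _ _, fun z hz => ?_⟩
    exact le_max_of_le_left (hC ⟨z, hz, rfl⟩)
  -- choose c
  set δ : ℝ := ε / (C + 1) with hδ_def
  have hδ : 0 < δ := div_pos hε (by linarith)
  obtain ⟨c, hc_bad, hc_ball⟩ := hbad.exists_mem_open Metric.isOpen_ball
    ⟨0, Metric.mem_ball_self hδ⟩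
  have hc_lt : ‖c‖ < δ := by simpa [Metric.mem_ball, dist_zero_right] using hc_ball
  -- the data
  refine ⟨v, fun x => c * p x, fun z => z + (c * p (z 0)) • v, hv0,
    (differentiable_const c).mul hp_diff, fun z => rfl, ?_, ?_, ?_⟩
  · -- (i) the intersection
    ext z
    constructor
    · rintro ⟨⟨w, ⟨ζ, rfl⟩, rfl⟩, a, ha⟩
      have hζ0 : (embC n ζ) 0 = ζ := by simp [embC, EuclideanSpace.single_apply]
      simp only [hζ0] at ha ⊢
      by_cases hpz : p ζ = 0
      · obtain ⟨t, ht, hteq⟩ := (hp_zero ζ).mp hpz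
        have hz : embC n ζ + (c * p ζ) • v = lam t := by
          rw [hpz, mul_zero, zero_smul, add_zero, hteq, ← key t ht]
        exact ⟨t, ht, hz.symm⟩
      · exfalso
        have hz0 : lam a 0 = ζ := by
          rw [ha]
          show (embC n ζ) 0 + (c * p ζ) * v 0 = ζ
          rw [hζ0, hv0, mul_zero, add_zero]
        have hz1 : lam a 1 = c * p ζ := by
          rw [ha]
          show (embC n ζ) 1 + (c * p ζ) * v 1 = c * p ζ
          have : (embC n ζ) 1 = 0 := by
            simp [embC, EuclideanSpace.single_apply, Fin.ext_iff]
          rw [this, hv1, mul_one, zero_add]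
        have haU : a ∈ U := by rw [hU_def]; simp only [Set.mem_setOf_eq, hz0]; exact hpz
        have : g a = c := by
          rw [hg_def]; simp only [hz0, hz1]
          field_simp
        exact hc_bad ⟨a, haU, this⟩
    · rintro ⟨t, ht, rfl⟩
      have hts : t ∈ s := by rw [hs_def, Set.Finite.mem_toFinset]; exact ht
      have hpt : p (lam t 0) = 0 := (hp_zero _).mpr ⟨t, ht, rfl⟩
      constructor
      · refine ⟨embC n (lam t 0), ⟨lam t 0, rfl⟩, ?_⟩
        have hζ0 : (embC n (lam t 0)) 0 = lam t 0 := by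
          simp [embC, EuclideanSpace.single_apply]
        show embC n (lam t 0) + (c * p ((embC n (lam t 0)) 0)) • v = lam t
        rw [hζ0, hpt, mul_zero, zero_smul, add_zero, ← key t ht]
      · exact ⟨t, rfl⟩
  · -- (ii) small on K
    intro z hz
    have : ‖z + (c * p (z 0)) • v - z‖ = ‖c‖ * ‖p (z 0)‖ := by
      rw [add_sub_cancel_left, norm_smul, norm_mul, hvnorm, mul_one]
    rw [this]
    calc ‖c‖ * ‖p (z 0)‖ ≤ ‖c‖ * C := by
          exact mul_le_mul_of_nonneg_left (hC z hz) (norm_nonneg _)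
      _ ≤ ‖c‖ * (C + 1) := by nlinarith [norm_nonneg c]
      _ < δ * (C + 1) := by nlinarith
      _ = ε := by rw [hδ_def]; field_simp
  · -- (iii) big-O
    intro t ht
    have hts : t ∈ s := by rw [hs_def, Set.Finite.mem_toFinset]; exact ht
    set q : ℂ → ℂ := fun x => ∏ u ∈ s.erase t, (x - lam u 0) ^ (r + 1) with hq_def
    have hpq : ∀ x, p x = (x - lam t 0) ^ (r + 1) * q x := by
      intro x
      rw [hp_def, hq_def]
      exact (Finset.mul_prod_erase s _ hts).symm
    have hq_cont : Continuous q := by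
      apply continuous_finset_prod
      exact fun u _ => ((continuous_id.sub continuous_const).pow _)
    set M : ℝ := ‖q (lam t 0)‖ + 1 with hM_def
    -- eventual bound
    have hev : ∀ᶠ z : EuclideanSpace ℂ (Fin (n + 2)) in nhds (lam t),
        ‖z + (c * p (z 0)) • v - z‖ ≤ (‖c‖ * M) * ‖(‖z - lam t‖ ^ (r + 1) : ℝ)‖ := by
      have hcont : Continuous fun z : EuclideanSpace ℂ (Fin (n + 2)) => ‖q (z 0)‖ :=
        (hq_cont.comp ((EuclideanSpace.proj (0 : Fin (n + 2))).continuous)).norm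
      have hev1 : ∀ᶠ z : EuclideanSpace ℂ (Fin (n + 2)) in nhds (lam t), ‖q (z 0)‖ < M := by
        have : ‖q ((lam t) 0)‖ < M := by rw [hM_def]; linarith
        exact (hcont.continuousAt).eventually_lt continuous_const.continuousAt this
      filter_upwards [hev1] with z hzq
      have hcoord : ‖z 0 - lam t 0‖ ≤ ‖z - lam t‖ := by
        have : (z - lam t) 0 = z 0 - lam t 0 := rfl
        rw [← this]; exact coord_norm_le _ _
      have hnn : (0:ℝ) ≤ ‖z - lam t‖ ^ (r + 1) := pow_nonneg (norm_nonneg _) _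
      rw [add_sub_cancel_left, norm_smul, norm_mul, hvnorm, mul_one, hpq,
        norm_mul, norm_pow, Real.norm_of_nonneg hnn]
      calc ‖c‖ * (‖z 0 - lam t 0‖ ^ (r + 1) * ‖q (z 0)‖)
          ≤ ‖c‖ * (‖z - lam t‖ ^ (r + 1) * M) := by
            apply mul_le_mul_of_nonneg_left _ (norm_nonneg c)
            apply mul_le_mul (pow_le_pow_left₀ (norm_nonneg _) hcoord _) hzq.le
              (norm_nonneg _) hnn
        _ = ‖c‖ * M * ‖z - lam t‖ ^ (r + 1) := by ring
    exact Asymptotics.IsBigO.of_bound _ hev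
end

section
/- Let n ≥ 2 and for each j ≥ 1 let Ψ_j be a shear of ℂⁿ of the form Ψ_j(z) = z + g_j(z₁)e₂ + h_j(z₁)v_j, where g_j, h_j are entire functions on ℂ and v_j ∈ ℂⁿ has first coordinate 0. Suppose there are numbers ε_j > 0 with ε_j < 2^{−j} such that |Ψ_j(z) − z| < ε_j whenever |z| ≤ j. Then the compositions Ψ₁ ∘ Ψ₂ ∘ … ∘ Ψ_k satisfy Ψ₁ ∘ … ∘ Ψ_k(z) = z + Σ_{j=1}^{k} (g_j(z₁)e₂ + h_j(z₁)v_j), and they converge uniformly on compact subsets of ℂⁿ as k → ∞ to a holomorphic automorphism Ψ of ℂⁿ of the form Ψ(z) = z + G(z₁) for some holomorphic map G: ℂ → {0} × ℂ^{n−1}. -/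
/-- The composition `Ψ₁ ∘ Ψ₂ ∘ ⋯ ∘ Ψ_k` of a sequence of self-maps (indexed from `1`);
for `k = 0` it is the identity. -/
def compSeq {α : Type*} (Ψ : ℕ → α → α) : ℕ → α → α
  | 0 => id
  | k + 1 => compSeq Ψ k ∘ Ψ (k + 1)

open Filter in
/-- **Convergence of compositions of shears to an automorphism.**
Let `n ≥ 2` (here `ℂⁿ` is `ℂ^(n+2)`) and for `j ≥ 1` let `Ψ_j(z) = z + g_j(z₁)e₂ + h_j(z₁)v_j`
be shears with `g_j, h_j` entire and `π₁ v_j = 0`.  If `|Ψ_j(z) − z| < ε_j < 2^{−j}`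
for `|z| ≤ j`, then `Ψ₁ ∘ ⋯ ∘ Ψ_k (z) = z + Σ_{j=1}^k (g_j(z₁)e₂ + h_j(z₁)v_j)`, and the
compositions converge uniformly on compact sets to a holomorphic automorphism
`Ψ(z) = z + G(z₁)` with `G : ℂ → {0} × ℂ^{n-1}` holomorphic. -/
theorem shear_compositions_converge
    (n : ℕ)
    (g h : ℕ → ℂ → ℂ)
    (v : ℕ → EuclideanSpace ℂ (Fin (n + 2)))
    (Ψ : ℕ → EuclideanSpace ℂ (Fin (n + 2)) → EuclideanSpace ℂ (Fin (n + 2)))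
    (hg : ∀ j, 1 ≤ j → Differentiable ℂ (g j))
    (hh : ∀ j, 1 ≤ j → Differentiable ℂ (h j))
    (hv : ∀ j, 1 ≤ j → v j 0 = 0)
    (hΨ : ∀ j, 1 ≤ j → ∀ z, Ψ j z =
      z + g j (z 0) • EuclideanSpace.single 1 (1 : ℂ) + h j (z 0) • v j)
    (ε : ℕ → ℝ)
    (hε_pos : ∀ j, 1 ≤ j → 0 < ε j)
    (hε_lt : ∀ j, 1 ≤ j → ε j < ((1 : ℝ) / 2) ^ j)
    (hsmall : ∀ j : ℕ, 1 ≤ j → ∀ z : EuclideanSpace ℂ (Fin (n + 2)),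
      ‖z‖ ≤ (j : ℝ) → ‖Ψ j z - z‖ < ε j) :
    (∀ k : ℕ, ∀ z : EuclideanSpace ℂ (Fin (n + 2)),
      compSeq Ψ k z = z + ∑ j ∈ Finset.Icc 1 k,
        (g j (z 0) • EuclideanSpace.single 1 (1 : ℂ) + h j (z 0) • v j)) ∧
    ∃ G : ℂ → EuclideanSpace ℂ (Fin (n + 2)),
      Differentiable ℂ G ∧
      (∀ ζ : ℂ, G ζ 0 = 0) ∧
      (∀ K : Set (EuclideanSpace ℂ (Fin (n + 2))), IsCompact K →
        TendstoUniformlyOn (fun k => compSeq Ψ k) (fun z => z + G (z 0)) atTop K) ∧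
      ∃ Ψinv : EuclideanSpace ℂ (Fin (n + 2)) → EuclideanSpace ℂ (Fin (n + 2)),
        Differentiable ℂ (fun z : EuclideanSpace ℂ (Fin (n + 2)) => z + G (z 0)) ∧
        Differentiable ℂ Ψinv ∧
        Function.LeftInverse Ψinv (fun z => z + G (z 0)) ∧
        Function.RightInverse Ψinv (fun z => z + G (z 0)) := by
  classical
  -- notation
  set A : ℕ → ℂ → EuclideanSpace ℂ (Fin (n + 2)) :=
    fun j ζ => g j ζ • EuclideanSpace.single 1 (1 : ℂ) + h j ζ • v j with hA
  have hA0 : ∀ j, 1 ≤ j → ∀ ζ, A j ζ 0 = 0 := by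
    intro j hj ζ
    simp [hA, PiLp.add_apply, PiLp.smul_apply, EuclideanSpace.single_apply, hv j hj]
  have hΨ' : ∀ j, 1 ≤ j → ∀ z, Ψ j z = z + A j (z 0) := by
    intro j hj z
    rw [hΨ j hj z, hA]; rw [add_assoc]
  have hΨ0 : ∀ j, 1 ≤ j → ∀ z, Ψ j z 0 = z 0 := by
    intro j hj z
    rw [hΨ' j hj z]
    simp [PiLp.add_apply, hA0 j hj]
  -- Part 1
  have hcomp : ∀ k : ℕ, ∀ z : EuclideanSpace ℂ (Fin (n + 2)),
      compSeq Ψ k z = z + ∑ j ∈ Finset.Icc 1 k, A j (z 0) := by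
    intro k
    induction k with
    | zero => intro z; simp [compSeq]
    | succ k ih =>
      intro z
      have h1 : compSeq Ψ (k + 1) z = compSeq Ψ k (Ψ (k + 1) z) := rfl
      rw [h1, ih, hΨ0 (k + 1) (Nat.le_add_left 1 k), hΨ' (k + 1) (Nat.le_add_left 1 k),
        Finset.sum_Icc_succ_top (Nat.le_add_left 1 k)]
      abel
  refine ⟨hcomp, ?_⟩
  -- the series terms, reindexed from 0
  set F : ℕ → ℂ → EuclideanSpace ℂ (Fin (n + 2)) := fun i ζ => A (i + 1) ζ with hF
  have hFdiff : ∀ i, Differentiable ℂ (F i) := by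
    intro i
    exact ((hg (i + 1) (Nat.le_add_left 1 i)).smul_const _).add
      ((hh (i + 1) (Nat.le_add_left 1 i)).smul_const _)
  -- bound on the terms
  have hFb : ∀ i : ℕ, ∀ ζ : ℂ, ‖ζ‖ ≤ (i + 1 : ℕ) → ‖F i ζ‖ ≤ ((1 : ℝ) / 2) ^ (i + 1) := by
    intro i ζ hζ
    have h1 : 1 ≤ i + 1 := Nat.le_add_left 1 i
    set z : EuclideanSpace ℂ (Fin (n + 2)) := EuclideanSpace.single 0 ζ with hz
    have hzn : ‖z‖ = ‖ζ‖ := EuclideanSpace.norm_single 0 ζ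
    have hz0 : z 0 = ζ := by simp [hz, EuclideanSpace.single_apply]
    have := hsmall (i + 1) h1 z (by rw [hzn]; exact_mod_cast hζ)
    have hdiff : Ψ (i + 1) z - z = F i ζ := by
      rw [hΨ' (i + 1) h1 z, hz0]; abel
    rw [hdiff] at this
    exact le_of_lt (this.trans (hε_lt (i + 1) h1))
  have hgeo : Summable (fun i : ℕ => ((1 : ℝ) / 2) ^ (i + 1)) := by
    have := summable_geometric_of_lt_one (by norm_num : (0:ℝ) ≤ 1/2) (by norm_num)
    exact (this.mul_right (1 / 2)).congr (fun i => by rw [pow_succ])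
  -- summability
  have hsum : ∀ ζ : ℂ, Summable (fun i => F i ζ) := by
    intro ζ
    apply Summable.of_norm_bounded_eventually_nat hgeo
    filter_upwards [eventually_ge_atTop ⌈‖ζ‖⌉₊] with i hi
    exact hFb i ζ (le_trans (Nat.le_ceil _) (by exact_mod_cast Nat.le_succ_of_le hi))
  -- the limit map
  set G : ℂ → EuclideanSpace ℂ (Fin (n + 2)) := fun ζ => ∑' i, F i ζ with hG
  -- uniform convergence of the partial sums on closed balls
  have huc : ∀ R : ℝ, TendstoUniformlyOn
      (fun k ζ => ∑ i ∈ Finset.range k, F i ζ) G atTop (Metric.closedBall 0 R) := by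
    intro R
    have base : TendstoUniformlyOn (fun t : Finset ℕ => fun ζ => ∑ i ∈ t, F i ζ) G atTop
        (Metric.closedBall 0 R) := by
      apply tendstoUniformlyOn_tsum_of_cofinite_eventually hgeo
      rw [Nat.cofinite_eq_atTop]
      filter_upwards [eventually_ge_atTop ⌈R⌉₊] with i hi ζ hζ
      have : ‖ζ‖ ≤ (i + 1 : ℕ) := by
        rw [mem_closedBall_zero_iff] at hζ
        exact hζ.trans ((Nat.le_ceil _).trans (by exact_mod_cast Nat.le_succ_of_le hi))
      exact hFb i ζ this
    exact fun u hu => tendsto_finset_range.eventually (base u hu)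
  -- G is entire
  have hGdiff : Differentiable ℂ G := by
    have hloc : TendstoLocallyUniformlyOn (fun k ζ => ∑ i ∈ Finset.range k, F i ζ) G atTop
        Set.univ := by
      rw [tendstoLocallyUniformlyOn_iff_forall_isCompact isOpen_univ]
      intro K _ hK
      obtain ⟨R, hR⟩ := hK.isBounded.subset_closedBall 0
      exact (huc R).mono hR
    have := hloc.differentiableOn
      (Filter.Eventually.of_forall fun k =>
        (Differentiable.fun_sum fun i _ => hFdiff i).differentiableOn) isOpen_univ
    rw [← differentiableOn_univ]; exact this
  have hG0 : ∀ ζ : ℂ, G ζ 0 = 0 := by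
    intro ζ
    have : (EuclideanSpace.proj (0 : Fin (n + 2)) : EuclideanSpace ℂ (Fin (n + 2)) →L[ℂ] ℂ)
        (G ζ) = ∑' i, (EuclideanSpace.proj (0 : Fin (n + 2))) (F i ζ) :=
      ContinuousLinearMap.map_tsum _ (hsum ζ)
    simp only [PiLp.proj_apply] at this
    rw [this]
    have : ∀ i : ℕ, F i ζ 0 = 0 := fun i => hA0 (i + 1) (Nat.le_add_left 1 i) ζ
    simp [this]
  -- coordinate bound
  have hcoord : ∀ z : EuclideanSpace ℂ (Fin (n + 2)), ‖z 0‖ ≤ ‖z‖ := by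
    intro z
    rw [EuclideanSpace.norm_eq]
    calc ‖z 0‖ = Real.sqrt (‖z 0‖ ^ 2) := (Real.sqrt_sq (norm_nonneg _)).symm
      _ ≤ _ := Real.sqrt_le_sqrt (Finset.single_le_sum
          (f := fun i => ‖z i‖ ^ 2) (fun i _ => sq_nonneg _) (Finset.mem_univ 0))
  -- reindexing of the partial sums
  have hre : ∀ k : ℕ, ∀ ζ : ℂ, ∑ j ∈ Finset.Icc 1 k, A j ζ = ∑ i ∈ Finset.range k, F i ζ := by
    intro k ζ
    rw [← Finset.Ico_add_one_right_eq_Icc, Finset.sum_Ico_eq_sum_range]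
    simp [hF, add_comm]
  refine ⟨G, hGdiff, hG0, ?_, ?_⟩
  · -- uniform convergence of the compositions on compacts
    intro K hK
    obtain ⟨R, hR⟩ := hK.isBounded.subset_closedBall 0
    have hsub : K ⊆ (fun z : EuclideanSpace ℂ (Fin (n + 2)) => z 0) ⁻¹' Metric.closedBall 0 R := by
      intro z hz
      have := hR hz
      rw [Set.mem_preimage, mem_closedBall_zero_iff]
      exact (hcoord z).trans (by rwa [← mem_closedBall_zero_iff])
    have hproj : TendstoUniformlyOn
        (fun (k : ℕ) (z : EuclideanSpace ℂ (Fin (n + 2))) => ∑ i ∈ Finset.range k, F i (z 0))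
        (fun z => G (z 0)) atTop K := by
      have := (huc R).comp (fun z : EuclideanSpace ℂ (Fin (n + 2)) => z 0)
      exact this.mono hsub
    have hid : TendstoUniformlyOn
        (fun (_ : ℕ) (z : EuclideanSpace ℂ (Fin (n + 2))) => z) (fun z => z) atTop K := by
      intro u hu
      filter_upwards with k z _
      exact refl_mem_uniformity hu
    have hlim := hid.add hproj
    apply hlim.congr
    filter_upwards with k z hz
    rw [hcomp k z, hre k (z 0)]
    rfl
  · -- the inverse
    refine ⟨fun z => z - G (z 0), ?_, ?_, ?_, ?_⟩
    · exact differentiable_id.add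
        (hGdiff.comp (EuclideanSpace.proj (0 : Fin (n + 2)) : EuclideanSpace ℂ (Fin (n + 2)) →L[ℂ] ℂ).differentiable)
    · exact differentiable_id.sub
        (hGdiff.comp (EuclideanSpace.proj (0 : Fin (n + 2)) : EuclideanSpace ℂ (Fin (n + 2)) →L[ℂ] ℂ).differentiable)
    · intro z
      have h0 : (z + G (z 0)) 0 = z 0 := by simp [PiLp.add_apply, hG0]
      simp only [h0]; abel
    · intro z
      have h0 : (z - G (z 0)) 0 = z 0 := by simp [PiLp.sub_apply, hG0]
      simp only [h0]; abel
end
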